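/- Let G = (V, E) be a finite simple graph with n vertices and m edges, with a fixed orientation assigning to each edge e = uv an ordered pair of its endpoints. Let G′ = (V′, E′) be the graph constructed from G as follows: replace each vertex u ∈ V by a path u₁u₂u₃ on three new vertices; for each edge e = uv ∈ E introduce four new vertices e_u, e_v, e_w, e_z and the edges e_u e_v, e_v e_w, e_w e_u, e_w e_z; and add the edges u₃ e_u and v₃ e_v. Then M = {u₂u₃ : u ∈ V} ∪ {e_u e_w : e = uv ∈ E} is a maximal matching of G′ with |M| = n + m. -/
import Mathlib


/-- The generating relation of the graph `G′` built from `G` (with an orientation given by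
`fst`/`snd`): each vertex `u` is replaced by a path `u₁u₂u₃` (the vertices
`Sum.inl (u, 0)`, `Sum.inl (u, 1)`, `Sum.inl (u, 2)`); each edge `e = uv` gets a gadget on
`e_u = Sum.inr (e, 0)`, `e_v = Sum.inr (e, 1)`, `e_w = Sum.inr (e, 2)`,
`e_z = Sum.inr (e, 3)` with edges `e_u e_v, e_v e_w, e_w e_u, e_w e_z`; and the edges
`u₃ e_u` and `v₃ e_v` are added, where `u = fst e` and `v = snd e`. -/
def vcu2Rel {V : Type*} (G : SimpleGraph V) (fst snd : Sym2 V → V) :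
    ((V × Fin 3) ⊕ (↥G.edgeSet × Fin 4)) → ((V × Fin 3) ⊕ (↥G.edgeSet × Fin 4)) → Prop
  | Sum.inl (u, i), Sum.inl (w, j) => u = w ∧ ((i = 0 ∧ j = 1) ∨ (i = 1 ∧ j = 2))
  | Sum.inr (e, i), Sum.inr (f, j) =>
      e = f ∧ ((i = 0 ∧ j = 1) ∨ (i = 1 ∧ j = 2) ∨ (i = 2 ∧ j = 0) ∨ (i = 2 ∧ j = 3))
  | Sum.inl (u, i), Sum.inr (e, j) =>
      i = 2 ∧ ((j = 0 ∧ fst e.val = u) ∨ (j = 1 ∧ snd e.val = u))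
  | _, _ => False

/-- The graph `G′` constructed from `G` and the orientation `fst`/`snd`. -/
def vcu2Graph {V : Type*} (G : SimpleGraph V) (fst snd : Sym2 V → V) :
    SimpleGraph ((V × Fin 3) ⊕ (↥G.edgeSet × Fin 4)) :=
  SimpleGraph.fromRel (vcu2Rel G fst snd)

/-- A set of edges of `H` forming a matching: pairwise disjoint edges of `H`. -/
def IsMatchingSet {W : Type*} (H : SimpleGraph W) (M : Set (Sym2 W)) : Prop :=
  M ⊆ H.edgeSet ∧ ∀ e ∈ M, ∀ f ∈ M, e ≠ f → ∀ x, x ∈ e → x ∉ f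

/-- A maximal matching: no edge of `H` can be added while keeping a matching. -/
def IsMaximalMatchingSet {W : Type*} (H : SimpleGraph W) (M : Set (Sym2 W)) : Prop :=
  IsMatchingSet H M ∧ ∀ e ∈ H.edgeSet, e ∉ M → ¬ IsMatchingSet H (insert e M)

section Aux
variable {V : Type*} (G : SimpleGraph V) (fst snd : Sym2 V → V)

private abbrev vcu2M : Set (Sym2 ((V × Fin 3) ⊕ (↥G.edgeSet × Fin 4))) :=
  (Set.range fun u : V => s(Sum.inl (u, 1), Sum.inl (u, 2))) ∪
  (Set.range fun e : ↥G.edgeSet => s(Sum.inr (e, 0), Sum.inr (e, 2)))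

private lemma vcu2_covered {a b : (V × Fin 3) ⊕ (↥G.edgeSet × Fin 4)}
    (h : vcu2Rel G fst snd a b) :
    ∃ x, (x = a ∨ x = b) ∧ ∃ f ∈ vcu2M G, x ∈ f := by
  match a, b with
  | Sum.inl (u, i), Sum.inl (w, j) =>
    obtain ⟨rfl, h⟩ := h
    rcases h with ⟨rfl, rfl⟩ | ⟨rfl, rfl⟩
    · exact ⟨Sum.inl (u, 1), Or.inr rfl, s(Sum.inl (u,1), Sum.inl (u,2)),
        Or.inl ⟨u, rfl⟩, by simp⟩
    · exact ⟨Sum.inl (u, 1), Or.inl rfl, s(Sum.inl (u,1), Sum.inl (u,2)),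
        Or.inl ⟨u, rfl⟩, by simp⟩
  | Sum.inr (e, i), Sum.inr (f, j) =>
    obtain ⟨rfl, h⟩ := h
    rcases h with ⟨rfl, rfl⟩ | ⟨rfl, rfl⟩ | ⟨rfl, rfl⟩ | ⟨rfl, rfl⟩
    · exact ⟨Sum.inr (e, 0), Or.inl rfl, s(Sum.inr (e,0), Sum.inr (e,2)),
        Or.inr ⟨e, rfl⟩, by simp⟩
    · exact ⟨Sum.inr (e, 2), Or.inr rfl, s(Sum.inr (e,0), Sum.inr (e,2)),
        Or.inr ⟨e, rfl⟩, by simp⟩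
    · exact ⟨Sum.inr (e, 2), Or.inl rfl, s(Sum.inr (e,0), Sum.inr (e,2)),
        Or.inr ⟨e, rfl⟩, by simp⟩
    · exact ⟨Sum.inr (e, 2), Or.inl rfl, s(Sum.inr (e,0), Sum.inr (e,2)),
        Or.inr ⟨e, rfl⟩, by simp⟩
  | Sum.inl (u, i), Sum.inr (e, j) =>
    obtain ⟨rfl, -⟩ := h
    exact ⟨Sum.inl (u, 2), Or.inl rfl, s(Sum.inl (u,1), Sum.inl (u,2)),
      Or.inl ⟨u, rfl⟩, by simp⟩
  | Sum.inr _, Sum.inl _ => exact absurd h (by simp [vcu2Rel])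

end Aux

/-- For a finite simple graph `G` with `n` vertices and `m` edges and a fixed
orientation `fst`/`snd` of its edges, the set
`M = {u₂u₃ : u ∈ V} ∪ {e_u e_w : e ∈ E}` is a maximal matching of `G′` with `|M| = n + m`. -/
theorem stmt_16 {V : Type*} [Fintype V] (G : SimpleGraph V) (fst snd : Sym2 V → V)
    (horient : ∀ e ∈ G.edgeSet, e = s(fst e, snd e)) :
    IsMaximalMatchingSet (vcu2Graph G fst snd)
      ((Set.range fun u : V => s(Sum.inl (u, 1), Sum.inl (u, 2))) ∪
       (Set.range fun e : ↥G.edgeSet => s(Sum.inr (e, 0), Sum.inr (e, 2)))) ∧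
    ((Set.range fun u : V => s(Sum.inl (u, 1), Sum.inl (u, 2))) ∪
       (Set.range fun e : ↥G.edgeSet =>
         s((Sum.inr (e, 0) : (V × Fin 3) ⊕ (↥G.edgeSet × Fin 4)), Sum.inr (e, 2)))).ncard =
      Fintype.card V + G.edgeSet.ncard := by
  classical
  set M := (Set.range fun u : V => s((Sum.inl (u, 1) : (V × Fin 3) ⊕ (↥G.edgeSet × Fin 4)), Sum.inl (u, 2))) ∪
      (Set.range fun e : ↥G.edgeSet => s((Sum.inr (e, 0) : (V × Fin 3) ⊕ (↥G.edgeSet × Fin 4)), Sum.inr (e, 2))) with hM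
  have hmatch : IsMatchingSet (vcu2Graph G fst snd) M := by
    constructor
    · rintro ε (⟨u, rfl⟩ | ⟨e, rfl⟩) <;>
      · rw [SimpleGraph.mem_edgeSet]
        simp [vcu2Graph, vcu2Rel]
    · rintro ε (⟨u, rfl⟩ | ⟨e, rfl⟩) f (⟨u', rfl⟩ | ⟨e', rfl⟩) hne x hx hx' <;>
        simp only [Sym2.mem_iff] at hx hx' <;>
        rcases hx with rfl | rfl <;>
        rcases hx' with h | h <;>
        simp_all [Sym2.eq, Sym2.rel_iff', Prod.ext_iff]
  refine ⟨⟨hmatch, ?_⟩, ?_⟩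
  · rintro ε hε hεM hIns
    induction ε using Sym2.ind with
    | _ a b =>
      rw [SimpleGraph.mem_edgeSet] at hε
      obtain ⟨hab, hrel⟩ := hε
      have hcov : ∃ x, (x = a ∨ x = b) ∧ ∃ f ∈ M, x ∈ f := by
        rcases hrel with h | h
        · exact vcu2_covered G fst snd h
        · obtain ⟨x, hx, hf⟩ := vcu2_covered G fst snd h
          exact ⟨x, hx.symm, hf⟩
      obtain ⟨x, hx, f, hfM, hxf⟩ := hcov
      have hne : s(a, b) ≠ f := fun h => hεM (h ▸ hfM)
      exact hIns.2 _ (Set.mem_insert _ _) f (Set.mem_insert_of_mem _ hfM) hne x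
        (by rcases hx with rfl | rfl <;> simp) hxf
  · have h1 : Function.Injective fun u : V =>
        s((Sum.inl (u, 1) : (V × Fin 3) ⊕ (↥G.edgeSet × Fin 4)), Sum.inl (u, 2)) := by
      intro u u' h
      simp [Sym2.eq, Sym2.rel_iff', Prod.ext_iff] at h
      tauto
    have h2 : Function.Injective fun e : ↥G.edgeSet =>
        s((Sum.inr (e, 0) : (V × Fin 3) ⊕ (↥G.edgeSet × Fin 4)), Sum.inr (e, 2)) := by
      intro e e' h
      simp [Sym2.eq, Sym2.rel_iff', Prod.ext_iff] at h
      tauto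
    have hfin : Finite ↥G.edgeSet := Set.Finite.to_subtype (Set.toFinite _)
    have hdisj : Disjoint
        (Set.range fun u : V => s((Sum.inl (u, 1) : (V × Fin 3) ⊕ (↥G.edgeSet × Fin 4)), Sum.inl (u, 2)))
        (Set.range fun e : ↥G.edgeSet => s((Sum.inr (e, 0) : (V × Fin 3) ⊕ (↥G.edgeSet × Fin 4)), Sum.inr (e, 2))) := by
      rw [Set.disjoint_iff_forall_ne]
      rintro _ ⟨u, rfl⟩ _ ⟨e, rfl⟩ h
      simp [Sym2.eq, Sym2.rel_iff'] at h
    rw [Set.ncard_union_eq hdisj (Set.toFinite _) (Set.toFinite _),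
      ← Set.image_univ, ← Set.image_univ,
      Set.ncard_image_of_injective _ h1, Set.ncard_image_of_injective _ h2,
      Set.ncard_univ, Set.ncard_univ, Nat.card_eq_fintype_card,
      Nat.card_coe_set_eq]
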